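/- For every n ≥ 1 and every tuple (i_0,…,i_n) of integers, there exists an array a ∈ G_n of weight (i_0,…,i_n) if and only if (i_0,…,i_n) ∈ ω_n, i.e., if and only if i_0 + i_1 + ⋯ + i_n = 0 + 1 + ⋯ + n and for every subset {k_0 < k_1 < ⋯ < k_s} of {0,1,…,n} one has i_{k_0} + i_{k_1} + ⋯ + i_{k_s} ≥ 0 + 1 + ⋯ + s. -/

import Mathlib

/-- `UT n`: strictly upper triangular 0-1 arrays `(a_{i,j})_{0 ≤ i < j ≤ n}`,
encoded as functions on `Fin (n+1) × Fin (n+1)` vanishing off the region `i < j`. -/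
def UT (n : ℕ) : Type :=
  {a : Fin (n + 1) → Fin (n + 1) → ℤ //
    ∀ i j : Fin (n + 1), (i < j → a i j = 0 ∨ a i j = 1) ∧ (¬ i < j → a i j = 0)}

/-- Adjacency in `G_n`: `a` and `b` differ exactly on a triple of positions
`(i,j), (j,l), (i,l)` with `i < j < l`, where one of them has entries `1, 1, 0` and
the other `0, 0, 1`. -/
def UTAdj {n : ℕ} (a b : UT n) : Prop :=
  ∃ i j l : Fin (n + 1), i < j ∧ j < l ∧
    ((a.1 i j = 1 ∧ a.1 j l = 1 ∧ a.1 i l = 0 ∧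
        b.1 i j = 0 ∧ b.1 j l = 0 ∧ b.1 i l = 1) ∨
      (b.1 i j = 1 ∧ b.1 j l = 1 ∧ b.1 i l = 0 ∧
        a.1 i j = 0 ∧ a.1 j l = 0 ∧ a.1 i l = 1)) ∧
    ∀ s t : Fin (n + 1),
      ¬ ((s = i ∧ t = j) ∨ (s = j ∧ t = l) ∨ (s = i ∧ t = l)) → a.1 s t = b.1 s t

/-- The weight of an array: `w_s(a) = ∑_{k<s} (1 - a_{k,s}) + ∑_{k>s} a_{s,k}`. -/
def UTweight {n : ℕ} (a : UT n) : Fin (n + 1) → ℤ := fun s =>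
  (∑ k : Fin (n + 1), if k < s then 1 - a.1 k s else 0) +
    ∑ k : Fin (n + 1), if s < k then a.1 s k else 0

/-- Membership in `ω_n`: the tuple sums to `0 + 1 + ⋯ + n` and every subset of the
entries sums to at least `0 + 1 + ⋯ + (s-1)` where `s` is the size of the subset. -/
def InOmega {n : ℕ} (c : Fin (n + 1) → ℤ) : Prop :=
  (∑ k : Fin (n + 1), c k = ∑ k : Fin (n + 1), (k : ℤ)) ∧
    ∀ s : Finset (Fin (n + 1)), (∑ t ∈ Finset.range s.card, (t : ℤ)) ≤ ∑ k ∈ s, c k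

open Finset in
private lemma sum_filter_lt_card {m : ℕ} (S : Finset (Fin m)) :
    ∑ s ∈ S, (S.filter (· < s)).card = ∑ t ∈ Finset.range S.card, t := by
  generalize hk : S.card = K
  induction K generalizing S with
  | zero =>
    rw [Finset.card_eq_zero] at hk; subst hk; simp
  | succ k ih =>
    have hne : S.Nonempty := Finset.card_pos.mp (by omega)
    have hMS : S.max' hne ∈ S := S.max'_mem hne
    set M := S.max' hne with hMdef
    have hcard : (S.erase M).card = k := by
      rw [Finset.card_erase_of_mem hMS, hk]; omega
    have hfiltM : S.filter (· < M) = S.erase M := by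
      ext x
      simp only [Finset.mem_filter, Finset.mem_erase]
      exact ⟨fun ⟨hx, hlt⟩ => ⟨ne_of_lt hlt, hx⟩,
        fun ⟨hne', hx⟩ => ⟨hx, lt_of_le_of_ne (S.le_max' x hx) hne'⟩⟩
    calc ∑ s ∈ S, (S.filter (· < s)).card
        = ∑ s ∈ S.erase M, (S.filter (· < s)).card + (S.filter (· < M)).card :=
          (Finset.sum_erase_add S _ hMS).symm
      _ = ∑ s ∈ S.erase M, ((S.erase M).filter (· < s)).card + k := by
          rw [hfiltM, hcard]
          congr 1
          refine Finset.sum_congr rfl fun s hs => ?_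
          rw [Finset.filter_erase, Finset.erase_eq_of_notMem]
          simp only [Finset.mem_filter, not_and]
          intro _ hMs
          exact absurd hMs (not_lt.mpr (S.le_max' s (Finset.mem_of_mem_erase hs)))
      _ = ∑ t ∈ Finset.range k, t + k := by rw [ih _ hcard]
      _ = ∑ t ∈ Finset.range (k+1), t := (Finset.sum_range_succ _ _).symm

private lemma card_upper_pairs {m : ℕ} (V : Finset (Fin m)) :
    ((V ×ˢ V).filter (fun p => p.1 < p.2)).card = ∑ t ∈ Finset.range V.card, t := by
  rw [← sum_filter_lt_card V,
    Finset.card_eq_sum_card_fiberwise (f := Prod.snd) (t := V)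
      (fun p hp => by simp only [Finset.mem_coe, Finset.mem_filter, Finset.mem_product] at hp; exact hp.1.2)]
  refine Finset.sum_congr rfl fun s hs => ?_
  refine Finset.card_bij' (fun p _ => p.1) (fun k _ => (k, s)) ?_ ?_ ?_ ?_
  · intro p hp
    simp only [Finset.mem_filter, Finset.mem_product] at hp ⊢
    exact ⟨hp.1.1.1, hp.2 ▸ hp.1.2⟩
  · intro k hk
    simp only [Finset.mem_filter] at hk
    refine Finset.mem_filter.mpr ⟨Finset.mem_filter.mpr ⟨Finset.mem_product.mpr ⟨hk.1, hs⟩, hk.2⟩, rfl⟩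
  · intro p hp
    simp only [Finset.mem_filter] at hp
    exact Prod.ext rfl hp.2.symm
  · intro k hk; rfl

private lemma inOmega_of_weight {n : ℕ} (a : UT n) : InOmega (UTweight a) := by
  have h01 : ∀ i j : Fin (n+1), i < j → a.1 i j = 0 ∨ a.1 i j = 1 := fun i j h => (a.2 i j).1 h
  have key : ∀ S : Finset (Fin (n+1)),
      (∑ t ∈ Finset.range S.card, (t : ℤ)) =
      ∑ s ∈ S, ((∑ k ∈ S, if k < s then 1 - a.1 k s else 0) +
        ∑ k ∈ S, if s < k then a.1 s k else 0) := by
    intro S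
    rw [Finset.sum_add_distrib]
    have h2 : ∑ s ∈ S, ∑ k ∈ S, (if s < k then a.1 s k else 0)
        = ∑ s ∈ S, ∑ k ∈ S, (if k < s then a.1 k s else 0) := Finset.sum_comm
    rw [h2, ← Finset.sum_add_distrib]
    have h3 : ∀ s ∈ S, ((∑ k ∈ S, if k < s then 1 - a.1 k s else 0) +
        ∑ k ∈ S, if k < s then a.1 k s else 0) = ((S.filter (· < s)).card : ℤ) := by
      intro s _
      rw [← Finset.sum_add_distrib, ← Finset.sum_boole]
      refine Finset.sum_congr rfl fun k _ => ?_
      split <;> ring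
    rw [Finset.sum_congr rfl h3]
    rw [← Nat.cast_sum, ← Nat.cast_sum, sum_filter_lt_card]
  constructor
  · have := key Finset.univ
    simp only [Finset.card_univ, Fintype.card_fin] at this
    rw [show (∑ k : Fin (n+1), (k:ℤ)) = ∑ t ∈ Finset.range (n+1), (t:ℤ) from
      Fin.sum_univ_eq_sum_range _ _, this]
    rfl
  · intro S
    rw [key S]
    refine Finset.sum_le_sum fun s _ => ?_
    unfold UTweight
    gcongr with k hk
    all_goals first
      | exact Finset.subset_univ S
      | (intro i _ _
         split
         · rename_i hlt
           rcases h01 _ _ hlt with h | h <;> omega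
         · exact le_refl 0)

private lemma weight_eq_sum_P {n : ℕ} (a : UT n) (s : Fin (n + 1)) :
    UTweight a s = ∑ p : {p : Fin (n + 1) × Fin (n + 1) // p.1 < p.2},
      ((if p.1.2 = s then 1 - a.1 p.1.1 p.1.2 else 0) +
        (if p.1.1 = s then a.1 p.1.1 p.1.2 else 0)) := by
  classical
  rw [Finset.sum_add_distrib]
  unfold UTweight
  congr 1
  · rw [← Finset.sum_subtype (Finset.univ.filter (fun p : Fin (n+1) × Fin (n+1) => p.1 < p.2))
      (by simp) (fun x => if x.2 = s then 1 - a.1 x.1 x.2 else 0)]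
    rw [Finset.sum_filter, ← Finset.univ_product_univ, Finset.sum_product]
    rw [Finset.sum_comm]
    have h1 : ∀ j : Fin (n+1), (∑ i : Fin (n+1),
        if i < j then (if j = s then 1 - a.1 i j else 0) else 0)
        = if j = s then (∑ i : Fin (n+1), if i < j then 1 - a.1 i j else 0) else 0 := by
      intro j
      split
      · rfl
      · simp
    rw [Finset.sum_congr rfl fun j _ => h1 j, Finset.sum_ite_eq' Finset.univ s]
    simp
  · rw [← Finset.sum_subtype (Finset.univ.filter (fun p : Fin (n+1) × Fin (n+1) => p.1 < p.2))
      (by simp) (fun x => if x.1 = s then a.1 x.1 x.2 else 0)]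
    rw [Finset.sum_filter, ← Finset.univ_product_univ, Finset.sum_product]
    have h1 : ∀ i : Fin (n+1), (∑ j : Fin (n+1),
        if i < j then (if i = s then a.1 i j else 0) else 0)
        = if i = s then (∑ j : Fin (n+1), if i < j then a.1 i j else 0) else 0 := by
      intro i
      split
      · rfl
      · simp
    rw [Finset.sum_congr rfl fun i _ => h1 i, Finset.sum_ite_eq' Finset.univ s]
    simp

private lemma exists_of_inOmega {n : ℕ} (c : Fin (n + 1) → ℤ) (hc : InOmega c) :
    ∃ a : UT n, UTweight a = c := by
  classical
  obtain ⟨hsum, hsub⟩ := hc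
  have hc0 : ∀ k, 0 ≤ c k := fun k => by simpa using hsub {k}
  let r : {p : Fin (n + 1) × Fin (n + 1) // p.1 < p.2} → Finset (Fin (n + 1) × ℕ) := fun p =>
    {p.1.1} ×ˢ Finset.range (c p.1.1).toNat ∪ {p.1.2} ×ˢ Finset.range (c p.1.2).toNat
  have hall : ∀ A : Finset {p : Fin (n + 1) × Fin (n + 1) // p.1 < p.2},
      A.card ≤ (A.biUnion r).card := by
    intro A
    set V : Finset (Fin (n + 1)) := A.biUnion (fun p => {p.1.1, p.1.2}) with hV
    have hBU : A.biUnion r = V.biUnion (fun v => {v} ×ˢ Finset.range (c v).toNat) := by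
      ext x
      simp only [Finset.mem_biUnion, hV, r, Finset.mem_union, Finset.mem_product,
        Finset.mem_singleton, Finset.mem_insert, Finset.mem_range]
      constructor
      · rintro ⟨p, hp, ⟨h1, h2⟩ | ⟨h1, h2⟩⟩
        · exact ⟨p.1.1, ⟨p, hp, Or.inl rfl⟩, h1, h2⟩
        · exact ⟨p.1.2, ⟨p, hp, Or.inr rfl⟩, h1, h2⟩
      · rintro ⟨v, ⟨p, hp, hv | hv⟩, h1, h2⟩ <;> subst hv
        · exact ⟨p, hp, Or.inl ⟨h1, h2⟩⟩
        · exact ⟨p, hp, Or.inr ⟨h1, h2⟩⟩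
    have hcard2 : (V.biUnion fun v => {v} ×ˢ Finset.range (c v).toNat).card
        = ∑ v ∈ V, (c v).toNat := by
      rw [Finset.card_biUnion]
      · exact Finset.sum_congr rfl fun v _ => by simp
      · intro v _ w _ hvw
        simp only [Finset.disjoint_left, Finset.mem_product, Finset.mem_singleton]
        rintro x ⟨h1, -⟩ ⟨h2, -⟩
        exact hvw (h1 ▸ h2 ▸ rfl)
    have hAcard : A.card ≤ ∑ t ∈ Finset.range V.card, t := by
      have himg : A.image Subtype.val ⊆ (V ×ˢ V).filter (fun p => p.1 < p.2) := by
        intro x hx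
        simp only [Finset.mem_image] at hx
        obtain ⟨p, hp, rfl⟩ := hx
        refine Finset.mem_filter.mpr ⟨Finset.mem_product.mpr ⟨?_, ?_⟩, p.2⟩
        · exact Finset.mem_biUnion.mpr ⟨p, hp, by simp⟩
        · exact Finset.mem_biUnion.mpr ⟨p, hp, by simp⟩
      calc A.card = (A.image Subtype.val).card :=
            (Finset.card_image_of_injective _ Subtype.val_injective).symm
        _ ≤ _ := Finset.card_le_card himg
        _ = _ := card_upper_pairs V
    have hZ : (∑ t ∈ Finset.range V.card, t : ℕ) ≤ ∑ v ∈ V, (c v).toNat := by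
      have : (∑ t ∈ Finset.range V.card, (t:ℤ)) ≤ ∑ v ∈ V, ((c v).toNat : ℤ) :=
        le_of_le_of_eq (hsub V)
          (Finset.sum_congr rfl fun v _ => (Int.toNat_of_nonneg (hc0 v)).symm)
      rwa [← Nat.cast_sum, ← Nat.cast_sum, Nat.cast_le] at this
    rw [hBU, hcard2]
    exact hAcard.trans hZ
  obtain ⟨f, hfinj, hfmem⟩ := (Finset.all_card_le_biUnion_card_iff_exists_injective r).mp hall
  set g : {p : Fin (n + 1) × Fin (n + 1) // p.1 < p.2} → Fin (n + 1) := fun p => (f p).1 with hgdef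
  have hg : ∀ p, g p = p.1.1 ∨ g p = p.1.2 := by
    intro p
    have := hfmem p
    simp only [r, Finset.mem_union, Finset.mem_product, Finset.mem_singleton] at this
    rcases this with ⟨h, -⟩ | ⟨h, -⟩
    · exact Or.inl h
    · exact Or.inr h
  have hg2 : ∀ p, (f p).2 ∈ Finset.range (c (g p)).toNat := by
    intro p
    have := hfmem p
    simp only [r, Finset.mem_union, Finset.mem_product, Finset.mem_singleton] at this
    rcases this with ⟨h, h2⟩ | ⟨h, h2⟩ <;> rw [hgdef] <;> simp only [h] <;> exact h2
  set a : Fin (n + 1) → Fin (n + 1) → ℤ := fun i j =>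
    if h : i < j then (if g ⟨(i, j), h⟩ = i then 1 else 0) else 0 with hadef
  have ha : ∀ i j : Fin (n + 1), (i < j → a i j = 0 ∨ a i j = 1) ∧ (¬ i < j → a i j = 0) := by
    intro i j
    constructor
    · intro h
      simp only [hadef, dif_pos h]
      split
      · exact Or.inr rfl
      · exact Or.inl rfl
    · intro h
      simp only [hadef, dif_neg h]
  refine ⟨⟨a, ha⟩, ?_⟩
  funext s
  -- the count of pairs assigned to s
  set m : Fin (n + 1) → ℕ := fun s => (Finset.univ.filter (fun p => g p = s)).card with hmdef
  have hws : UTweight ⟨a, ha⟩ s = (m s : ℤ) := by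
    refine (weight_eq_sum_P ⟨a, ha⟩ s).trans ?_
    have hterm : ∀ p : {p : Fin (n + 1) × Fin (n + 1) // p.1 < p.2},
        ((if p.1.2 = s then 1 - a p.1.1 p.1.2 else 0) +
          (if p.1.1 = s then a p.1.1 p.1.2 else 0)) = if g p = s then 1 else 0 := by
      intro p
      have hlt : p.1.1 < p.1.2 := p.2
      have hne : p.1.1 ≠ p.1.2 := ne_of_lt hlt
      have hps : (⟨(p.1.1, p.1.2), hlt⟩ : {p : Fin (n + 1) × Fin (n + 1) // p.1 < p.2}) = p :=
        Subtype.ext rfl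
      have haval : a p.1.1 p.1.2 = if g p = p.1.1 then 1 else 0 := by
        simp only [hadef, dif_pos hlt, hps]
      rw [haval]
      rcases hg p with h | h <;> rw [h] <;>
        by_cases h1 : p.1.1 = s <;> by_cases h2 : p.1.2 = s
      all_goals first
        | exact absurd (h1.trans h2.symm) hne
        | simp [h1, h2, hne, Ne.symm hne, Ne.symm h1]
        | simp [h1, h2, hne, Ne.symm hne]
    rw [Finset.sum_congr rfl fun p _ => hterm p, Finset.sum_boole, hmdef]
  rw [hws]
  -- now show (m s : ℤ) = c s
  have hle : ∀ t : Fin (n+1), m t ≤ (c t).toNat := by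
    intro t
    have hcard : (Finset.univ.filter (fun p => g p = t)).card
        ≤ (Finset.range (c t).toNat).card := by
      apply Finset.card_le_card_of_injOn (fun p => (f p).2)
      · intro p hp
        simp only [Finset.mem_coe, Finset.mem_filter] at hp
        have := hg2 p
        rwa [hp.2] at this
      · intro p hp q hq hpq
        simp only [Finset.coe_filter, Set.mem_setOf_eq] at hp hq
        apply hfinj
        apply Prod.ext
        · rw [show (f p).1 = g p from rfl, show (f q).1 = g q from rfl, hp.2, hq.2]
        · exact hpq
    simpa [hmdef] using hcard
  have htot : ∑ t : Fin (n+1), m t = ∑ t : Fin (n+1), (c t).toNat := by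
    have h1 : ∑ t : Fin (n+1), m t
        = Fintype.card {p : Fin (n+1) × Fin (n+1) // p.1 < p.2} := by
      rw [← Finset.card_univ,
        Finset.card_eq_sum_card_fiberwise (f := g) (t := Finset.univ)
          (fun x _ => Finset.mem_univ _)]
    have h2 : Fintype.card {p : Fin (n+1) × Fin (n+1) // p.1 < p.2}
        = ∑ t ∈ Finset.range (n+1), t := by
      rw [Fintype.card_subtype]
      have huu : (Finset.univ.filter fun p : Fin (n+1) × Fin (n+1) => p.1 < p.2)
          = ((Finset.univ ×ˢ Finset.univ).filter fun p => p.1 < p.2) := by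
        rw [Finset.univ_product_univ]
      rw [huu, card_upper_pairs, Finset.card_univ, Fintype.card_fin]
    have h3 : (∑ t : Fin (n+1), ((c t).toNat : ℤ)) = ∑ t ∈ Finset.range (n+1), (t : ℤ) := by
      calc (∑ t : Fin (n+1), ((c t).toNat : ℤ)) = ∑ t : Fin (n+1), c t :=
            Finset.sum_congr rfl fun t _ => Int.toNat_of_nonneg (hc0 t)
        _ = ∑ t : Fin (n+1), ((t : ℕ) : ℤ) := hsum
        _ = _ := Fin.sum_univ_eq_sum_range _ _
    have h4 : ∑ t : Fin (n+1), (c t).toNat = ∑ t ∈ Finset.range (n+1), t := by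
      rw [← Nat.cast_sum, ← Nat.cast_sum] at h3
      exact_mod_cast h3
    rw [h1, h2, ← h4]
  have hfin := (Finset.sum_eq_sum_iff_of_le (fun t (_ : t ∈ Finset.univ) => hle t)).mp htot s
    (Finset.mem_univ s)
  rw [hfin, Int.toNat_of_nonneg (hc0 s)]


/-- A tuple of integers is the weight of some array in `G_n` iff it belongs to `ω_n`. -/
theorem weight_realizable_iff_inOmega (n : ℕ) (hn : 1 ≤ n) (c : Fin (n + 1) → ℤ) :
    (∃ a : UT n, UTweight a = c) ↔ InOmega c := by
  constructor
  · rintro ⟨a, rfl⟩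
    exact inOmega_of_weight a
  · exact exists_of_inOmega c
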